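/- For all functions f : (ZMod 3)^K → ℂ and g : (ZMod 3)^L → ℂ, under the 4NAT test distribution one has E[f(x)·g(y)·g(z)] = ∑_{α ∈ (ZMod 3)^L} f̂(π₃(α))·ĝ(α)²·(−1/2)^{#α}. -/

import Mathlib

open Finset

noncomputable def ω : ℂ := Complex.exp (2 * (Real.pi : ℂ) * Complex.I / 3)

/-- Fourier coefficient `f̂(α) = E_x[f(x) ω^{-α·x}]`. -/
noncomputable def fCoeff {ι : Type} [Fintype ι] [DecidableEq ι] (f : (ι → ZMod 3) → ℂ)
    (α : ι → ZMod 3) : ℂ :=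
  (∑ x : ι → ZMod 3, f x * ω ^ ((-(∑ i, α i * x i)).val)) / 3 ^ (Fintype.card ι)

/-- The TwoPair predicate: the four inputs take exactly two distinct values,
each occurring exactly twice. -/
def TwoPair (a : Fin 4 → ZMod 3) : Prop :=
  ∃ b c : ZMod 3, b ≠ c ∧
    (univ.filter fun i => a i = b).card = 2 ∧
    (univ.filter fun i => a i = c).card = 2

-- Expectation of a complex-valued function of `(x, y, z, w)` under the 4NAT
-- test distribution with parameters `d`, `K` (coordinates `j ∈ [L]`, `L = dK`,
-- are encoded as pairs `(i, j') ∈ Fin K × Fin d` with block `π(j) = i`).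
open Classical in
noncomputable def natTestExpC (d K : ℕ)
    (h : (Fin K → ZMod 3) → ((Fin K × Fin d) → ZMod 3) →
         ((Fin K × Fin d) → ZMod 3) → ((Fin K × Fin d) → ZMod 3) → ℂ) : ℂ :=
  (∑ x : Fin K → ZMod 3, ∑ y : (Fin K × Fin d) → ZMod 3,
    ∑ z : (Fin K × Fin d) → ZMod 3, ∑ w : (Fin K × Fin d) → ZMod 3,
      (if ∀ j : Fin K × Fin d, TwoPair ![x j.1, y j, z j, w j] then 1 else 0)
        * h x y z w)
    / (3 ^ K * 6 ^ (d * K))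

lemma omega_prim : IsPrimitiveRoot ω 3 := by
  have h := Complex.isPrimitiveRoot_exp 3 (by norm_num)
  convert h using 2
  simp [ω]

lemma omega_pow_three : ω ^ 3 = 1 := omega_prim.pow_eq_one

lemma omega_sum : 1 + ω + ω ^ 2 = 0 := by
  have h := omega_prim.geom_sum_eq_zero (by norm_num)
  simpa [Finset.sum_range_succ] using h

lemma omega_pow_mod (m : ℕ) : ω ^ m = ω ^ (m % 3) := by
  conv_lhs => rw [← Nat.div_add_mod m 3]
  rw [pow_add, pow_mul, omega_pow_three, one_pow, one_mul]

noncomputable def eω (t : ZMod 3) : ℂ := ω ^ t.val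

lemma eω_zero : eω 0 = 1 := rfl

lemma eω_add (a b : ZMod 3) : eω (a + b) = eω a * eω b := by
  unfold eω
  rw [ZMod.val_add, ← omega_pow_mod, pow_add]

lemma eω_sum {ι : Type*} (s : Finset ι) (f : ι → ZMod 3) :
    eω (∑ i ∈ s, f i) = ∏ i ∈ s, eω (f i) := by
  induction s using Finset.cons_induction with
  | empty => simp [eω_zero]
  | cons a s ha ih => rw [Finset.sum_cons, Finset.prod_cons, eω_add, ih]

lemma zmod3_univ : (univ : Finset (ZMod 3)) = {0, 1, 2} := by decide

lemma zmod3_sum (F : ZMod 3 → ℂ) : ∑ t : ZMod 3, F t = F 0 + F 1 + F 2 := by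
  rw [zmod3_univ, Finset.sum_insert (by decide), Finset.sum_insert (by decide),
    Finset.sum_singleton, add_assoc]

lemma eω_one : eω 1 = ω := by unfold eω; norm_num [show ((1:ZMod 3)).val = 1 from rfl]
lemma eω_two : eω 2 = ω ^ 2 := by unfold eω; norm_num [show ((2:ZMod 3)).val = 2 from rfl]

lemma T_eq (u : ZMod 3) :
    (∑ t : ZMod 3, eω (-(t * u)) * (-(1/2) : ℂ) ^ (if t ≠ 0 then 1 else 0))
      = (3/2) * (if u = 0 then (0:ℂ) else 1) := by
  rw [zmod3_sum]
  have hu : u = 0 ∨ u = 1 ∨ u = 2 := by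
    have h : ∀ v : ZMod 3, v = 0 ∨ v = 1 ∨ v = 2 := by decide
    exact h u
  have h0 : ((0:ZMod 3) ≠ 0) = False := by simp
  have h1 : ((1:ZMod 3) ≠ 0) = True := by simp [show ((1:ZMod 3)) ≠ 0 from by decide]
  have h2 : ((2:ZMod 3) ≠ 0) = True := by simp [show ((2:ZMod 3)) ≠ 0 from by decide]
  rcases hu with rfl | rfl | rfl
  · rw [show (-(0*0):ZMod 3) = 0 from by decide, show (-(1*0):ZMod 3) = 0 from by decide,
      show (-(2*0):ZMod 3) = 0 from by decide]
    simp only [h0, h1, h2, if_true, if_false, eω_zero]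
    norm_num
  · rw [show (-(0*1):ZMod 3) = 0 from by decide, show (-(1*1):ZMod 3) = 2 from by decide,
      show (-(2*1):ZMod 3) = 1 from by decide]
    simp only [h0, h1, h2, if_true, if_false, eω_zero, eω_one, eω_two,
      if_neg (show ¬((1:ZMod 3) = 0) from by decide)]
    ring_nf
    linear_combination (-(1/2):ℂ) * omega_sum
  · rw [show (-(0*2):ZMod 3) = 0 from by decide, show (-(1*2):ZMod 3) = 1 from by decide,
      show (-(2*2):ZMod 3) = 2 from by decide]
    simp only [h0, h1, h2, if_true, if_false, eω_zero, eω_one, eω_two,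
      if_neg (show ¬((2:ZMod 3) = 0) from by decide)]
    ring_nf
    linear_combination (-(1/2):ℂ) * omega_sum
set_option maxHeartbeats 2000000 in
lemma S_eq (d K : ℕ) (x : Fin K → ZMod 3) (y z : (Fin K × Fin d) → ZMod 3) :
    (∑ α : (Fin K × Fin d) → ZMod 3,
      eω (-(∑ i, (∑ j, α (i, j)) * x i)) * eω (-(∑ J, α J * y J)) * eω (-(∑ J, α J * z J))
        * (-(1/2):ℂ) ^ (univ.filter fun J => α J ≠ 0).card)
      = (3/2)^(K*d) * ∏ J : Fin K × Fin d, (if x J.1 + y J + z J = 0 then (0:ℂ) else 1) := by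
  have hterm : ∀ α : (Fin K × Fin d) → ZMod 3,
      eω (-(∑ i, (∑ j, α (i, j)) * x i)) * eω (-(∑ J, α J * y J)) * eω (-(∑ J, α J * z J))
        * (-(1/2):ℂ) ^ (univ.filter fun J => α J ≠ 0).card
      = ∏ J : Fin K × Fin d,
          (eω (-(α J * (x J.1 + y J + z J))) * (-(1/2):ℂ) ^ (if α J ≠ 0 then 1 else 0)) := by
    intro α
    have hx : (∑ i, (∑ j, α (i, j)) * x i) = ∑ J : Fin K × Fin d, α J * x J.1 := by
      rw [Fintype.sum_prod_type]
      exact Finset.sum_congr rfl fun i _ => Finset.sum_mul _ _ _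
    have hneg : ∀ (t : (Fin K × Fin d) → ZMod 3),
        (-(∑ J : Fin K × Fin d, t J)) = ∑ J : Fin K × Fin d, -(t J) := by
      intro t; rw [Finset.sum_neg_distrib]
    have hcard : ((univ.filter fun J => α J ≠ 0).card : ℕ)
        = ∑ J : Fin K × Fin d, (if α J ≠ 0 then 1 else 0) := Finset.card_filter _ _
    rw [hx, hneg, hneg fun J => α J * y J, hneg fun J => α J * z J,
      eω_sum, eω_sum, eω_sum, hcard, ← Finset.prod_pow_eq_pow_sum,
      ← Finset.prod_mul_distrib, ← Finset.prod_mul_distrib, ← Finset.prod_mul_distrib]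
    refine Finset.prod_congr rfl fun J _ => ?_
    congr 1
    rw [← eω_add, ← eω_add]
    congr 1
    ring
  rw [Finset.sum_congr rfl fun α _ => hterm α]
  rw [← Fintype.piFinset_univ]
  rw [show (∑ α ∈ Fintype.piFinset fun _ : Fin K × Fin d => (univ : Finset (ZMod 3)),
      ∏ J : Fin K × Fin d,
        eω (-(α J * (x J.1 + y J + z J))) * (-(1/2):ℂ) ^ (if α J ≠ 0 then 1 else 0))
    = ∏ J : Fin K × Fin d, ∑ t : ZMod 3,
        eω (-(t * (x J.1 + y J + z J))) * (-(1/2):ℂ) ^ (if t ≠ 0 then 1 else 0) from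
    (Finset.prod_univ_sum (fun _ : Fin K × Fin d => (univ : Finset (ZMod 3)))
      (fun J t => eω (-(t * (x J.1 + y J + z J))) * (-(1/2):ℂ) ^ (if t ≠ 0 then 1 else 0))).symm]
  rw [Finset.prod_congr rfl fun J _ => T_eq (x J.1 + y J + z J)]
  rw [Finset.prod_mul_distrib, Finset.prod_const, Finset.card_univ, Fintype.card_prod,
    Fintype.card_fin, Fintype.card_fin]

instance : DecidablePred TwoPair := fun a => by unfold TwoPair; infer_instance

lemma twoPair_count (a b c : ZMod 3) :
    (univ.filter fun u => TwoPair ![a, b, c, u]).card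
      = if a + b + c = 0 then 0 else 1 := by
  revert a b c; decide

lemma cnt_eq (a b c : ZMod 3) :
    (∑ u : ZMod 3, if TwoPair ![a, b, c, u] then (1:ℂ) else 0)
      = if a + b + c = 0 then 0 else 1 := by
  rw [Finset.sum_boole, twoPair_count]
  split <;> simp

set_option maxHeartbeats 1000000 in
lemma LHS_eq (d K : ℕ) (f : (Fin K → ZMod 3) → ℂ) (g : ((Fin K × Fin d) → ZMod 3) → ℂ) :
    natTestExpC d K (fun x y z _w => f x * g y * g z)
      = (∑ x : Fin K → ZMod 3, ∑ y : (Fin K × Fin d) → ZMod 3,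
          ∑ z : (Fin K × Fin d) → ZMod 3,
          f x * g y * g z * ∏ J : Fin K × Fin d, (if x J.1 + y J + z J = 0 then (0:ℂ) else 1))
        / (3 ^ K * 6 ^ (d * K)) := by
  unfold natTestExpC
  refine congrArg (fun t : ℂ => t / (3 ^ K * 6 ^ (d * K))) ?_
  refine Finset.sum_congr rfl fun x _ => Finset.sum_congr rfl fun y _ =>
    Finset.sum_congr rfl fun z _ => ?_
  simp only []
  rw [← Finset.sum_mul, mul_comm _ (f x * g y * g z)]
  congr 1
  trans (∑ w : (Fin K × Fin d) → ZMod 3, ∏ J : Fin K × Fin d,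
      (if TwoPair ![x J.1, y J, z J, w J] then (1:ℂ) else 0))
  · refine Finset.sum_congr rfl fun w _ => ?_
    by_cases h : ∀ j : Fin K × Fin d, TwoPair ![x j.1, y j, z j, w j]
    · rw [if_pos h, Finset.prod_eq_one fun J _ => if_pos (h J)]
    · rw [if_neg h]
      push_neg at h
      obtain ⟨j, hj⟩ := h
      refine (Finset.prod_eq_zero (mem_univ j) ?_).symm
      exact if_neg hj
  trans (∏ J : Fin K × Fin d, ∑ u : ZMod 3,
      (if TwoPair ![x J.1, y J, z J, u] then (1:ℂ) else 0))
  · rw [← Fintype.piFinset_univ]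
    exact (Finset.prod_univ_sum (fun _ : Fin K × Fin d => (univ : Finset (ZMod 3)))
      (fun J u => if TwoPair ![x J.1, y J, z J, u] then (1:ℂ) else 0)).symm
  exact Finset.prod_congr rfl fun J _ => cnt_eq _ _ _

lemma eω_def (t : ZMod 3) : ω ^ t.val = eω t := rfl

set_option maxHeartbeats 1000000 in
theorem fourier_formula_fgg (d K : ℕ) (hd : 0 < d) (hK : 0 < K)
    (f : (Fin K → ZMod 3) → ℂ) (g : ((Fin K × Fin d) → ZMod 3) → ℂ) :
    natTestExpC d K (fun x y z _w => f x * g y * g z)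
      = ∑ α : (Fin K × Fin d) → ZMod 3,
          fCoeff f (fun i => ∑ j : Fin d, α (i, j)) * (fCoeff g α) ^ 2 *
            (-(1 / 2) : ℂ) ^ (univ.filter fun j => α j ≠ 0).card := by
  have hterm : ∀ α : (Fin K × Fin d) → ZMod 3,
      fCoeff f (fun i => ∑ j : Fin d, α (i, j)) * (fCoeff g α) ^ 2 *
          (-(1 / 2) : ℂ) ^ (univ.filter fun j => α j ≠ 0).card
      = (∑ x : Fin K → ZMod 3, ∑ y : (Fin K × Fin d) → ZMod 3,
          ∑ z : (Fin K × Fin d) → ZMod 3,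
          f x * g y * g z *
            (eω (-(∑ i, (∑ j, α (i, j)) * x i)) * eω (-(∑ J, α J * y J))
              * eω (-(∑ J, α J * z J))
              * (-(1/2):ℂ) ^ (univ.filter fun J => α J ≠ 0).card))
        / ((3:ℂ) ^ K * ((3:ℂ) ^ (K * d) * (3:ℂ) ^ (K * d))) := by
    intro α
    unfold fCoeff
    simp only [eω_def, Fintype.card_prod, Fintype.card_fin]
    rw [pow_two]
    have hkey : (∑ x : Fin K → ZMod 3, f x * eω (-(∑ i, (∑ j : Fin d, α (i, j)) * x i)))
        * ((∑ y : (Fin K × Fin d) → ZMod 3, g y * eω (-(∑ J, α J * y J)))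
          * (∑ z : (Fin K × Fin d) → ZMod 3, g z * eω (-(∑ J, α J * z J))))
        * (-(1/2):ℂ) ^ (univ.filter fun J => α J ≠ 0).card
      = ∑ x : Fin K → ZMod 3, ∑ y : (Fin K × Fin d) → ZMod 3,
          ∑ z : (Fin K × Fin d) → ZMod 3,
          f x * g y * g z *
            (eω (-(∑ i, (∑ j, α (i, j)) * x i)) * eω (-(∑ J, α J * y J))
              * eω (-(∑ J, α J * z J))
              * (-(1/2):ℂ) ^ (univ.filter fun J => α J ≠ 0).card) := by
      rw [Finset.sum_mul_sum, Finset.sum_mul_sum]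
      simp only [Finset.sum_mul, Finset.mul_sum]
      exact Finset.sum_congr rfl fun x _ => Finset.sum_congr rfl fun y _ =>
        Finset.sum_congr rfl fun z _ => by ring
    rw [← hkey]
    ring
  rw [LHS_eq d K f g, Finset.sum_congr rfl (fun α _ => hterm α), ← Finset.sum_div]
  have h1 : (∑ α : (Fin K × Fin d) → ZMod 3,
        ∑ x : Fin K → ZMod 3, ∑ y : (Fin K × Fin d) → ZMod 3,
          ∑ z : (Fin K × Fin d) → ZMod 3,
          f x * g y * g z *
            (eω (-(∑ i, (∑ j, α (i, j)) * x i)) * eω (-(∑ J, α J * y J))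
              * eω (-(∑ J, α J * z J))
              * (-(1/2):ℂ) ^ (univ.filter fun J => α J ≠ 0).card))
      = ∑ x : Fin K → ZMod 3, ∑ y : (Fin K × Fin d) → ZMod 3,
          ∑ z : (Fin K × Fin d) → ZMod 3,
          f x * g y * g z * ((3/2:ℂ) ^ (K * d)
            * ∏ J : Fin K × Fin d, (if x J.1 + y J + z J = 0 then (0:ℂ) else 1)) := by
    rw [Finset.sum_comm]
    refine Finset.sum_congr rfl fun x _ => ?_
    rw [Finset.sum_comm]
    refine Finset.sum_congr rfl fun y _ => ?_
    rw [Finset.sum_comm]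
    refine Finset.sum_congr rfl fun z _ => ?_
    rw [← Finset.mul_sum, S_eq d K x y z]
  rw [h1]
  have h2 : (∑ x : Fin K → ZMod 3, ∑ y : (Fin K × Fin d) → ZMod 3,
          ∑ z : (Fin K × Fin d) → ZMod 3,
          f x * g y * g z * ((3/2:ℂ) ^ (K * d)
            * ∏ J : Fin K × Fin d, (if x J.1 + y J + z J = 0 then (0:ℂ) else 1)))
      = (3/2:ℂ) ^ (K * d) * ∑ x : Fin K → ZMod 3, ∑ y : (Fin K × Fin d) → ZMod 3,
          ∑ z : (Fin K × Fin d) → ZMod 3,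
          f x * g y * g z
            * ∏ J : Fin K × Fin d, (if x J.1 + y J + z J = 0 then (0:ℂ) else 1) := by
    have hpt : ∀ (x : Fin K → ZMod 3) (y z : (Fin K × Fin d) → ZMod 3),
        f x * g y * g z * ((3/2:ℂ) ^ (K * d)
          * ∏ J : Fin K × Fin d, (if x J.1 + y J + z J = 0 then (0:ℂ) else 1))
        = (3/2:ℂ) ^ (K * d) * (f x * g y * g z
          * ∏ J : Fin K × Fin d, (if x J.1 + y J + z J = 0 then (0:ℂ) else 1)) := by
      intros; ring
    simp only [hpt, ← Finset.mul_sum]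
  rw [h2]
  have h3 : (3:ℂ) ≠ 0 := by norm_num
  have h6 : (6:ℂ) ≠ 0 := by norm_num
  have hA : ((3:ℂ) ^ K * 6 ^ (d * K)) ≠ 0 :=
    mul_ne_zero (pow_ne_zero _ h3) (pow_ne_zero _ h6)
  have hB : ((3:ℂ) ^ K * ((3:ℂ) ^ (K * d) * (3:ℂ) ^ (K * d))) ≠ 0 :=
    mul_ne_zero (pow_ne_zero _ h3) (mul_ne_zero (pow_ne_zero _ h3) (pow_ne_zero _ h3))
  rw [div_eq_div_iff hA hB, Nat.mul_comm d K]
  have hc : (3:ℂ) ^ (K * d) * (3:ℂ) ^ (K * d) = (3/2:ℂ) ^ (K * d) * (6:ℂ) ^ (K * d) := by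
    rw [← mul_pow, ← mul_pow]; norm_num
  rw [hc]
  ring
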